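/- Let R be a commutative ring with automorphism σ and let # be the anti-involution of the twisted Laurent polynomial ring R[Λ, Λ^{-1}; σ] determined by a^# = a for a ∈ R and Λ^# = Λ^{-1}. For elements a_1, …, a_N ∈ R define 𝓐 := (Σ_{i=1}^{N} (a_iΛ^i - Λ^{-i}a_i))·(Λ - Λ^{-1}). Then 𝓐^# = (Λ - Λ^{-1})·𝓐·(Λ - Λ^{-1})^{-1}, i.e. (Λ - Λ^{-1})^{-1}·𝓐^#·(Λ - Λ^{-1}) = 𝓐, as an identity in the localization of R[Λ,Λ^{-1};σ] at Λ - Λ^{-1} (equivalently, 𝓐^#·(Λ-Λ^{-1}) = (Λ-Λ^{-1})·𝓐). -/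
import Mathlib

namespace ExtendedDToda
/-- The twisted Laurent polynomial ring `R[Λ, Λ^{-1}; σ]`: finite sums
`Σ_i a_i Λ^i` with the relation `Λ·a = σ(a)·Λ`. -/
structure TL (R : Type) [CommRing R] : Type where
  coeff : ℤ → R
  fin : (Function.support coeff).Finite
namespace TL
variable {R : Type} [CommRing R] (σ : RingAut R)
/-- The monomial `r·Λ^k`. -/
def single (k : ℤ) (r : R) : TL R :=
  ⟨fun n => if n = k then r else 0,
   Set.Finite.subset (Set.finite_singleton k) (by
     intro n hn
     rw [Function.mem_support] at hn
     by_contra h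
     exact hn (if_neg (by simpa [Set.mem_singleton_iff] using h)))⟩
/-- The constant `r·Λ^0`. -/
def cst (r : R) : TL R := single 0 r
/-- The monomial `Λ^k`. -/
def lam (k : ℤ) : TL R := single k 1
/-- The identity `1 = Λ^0`. -/
def one : TL R := lam 0
def zero : TL R :=
  ⟨fun _ => 0, Set.Finite.subset Set.finite_empty (by
    intro n hn
    rw [Function.mem_support] at hn
    exact absurd rfl hn)⟩
def tadd (P Q : TL R) : TL R :=
  ⟨fun n => P.coeff n + Q.coeff n,
   Set.Finite.subset (P.fin.union Q.fin) (by
     intro n hn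
     rw [Function.mem_support] at hn
     by_contra h
     simp only [Set.mem_union, Function.mem_support, not_or, not_not] at h
     exact hn (by rw [h.1, h.2, add_zero]))⟩
def tneg (P : TL R) : TL R :=
  ⟨fun n => -P.coeff n,
   Set.Finite.subset P.fin (by
     intro n hn
     rw [Function.mem_support] at hn
     rw [Function.mem_support]
     intro h
     exact hn (by rw [h, neg_zero]))⟩
def tsub (P Q : TL R) : TL R := tadd P (tneg Q)
/-- The product in `R[Λ, Λ^{-1}; σ]`, determined by `Λ^i·a = σ^i(a)·Λ^i`. -/
noncomputable def tmul (P Q : TL R) : TL R :=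
  ⟨fun n => ∑ᶠ i : ℤ, P.coeff i * (σ ^ i) (Q.coeff (n - i)),
   Set.Finite.subset (Set.Finite.image2 (· + ·) P.fin Q.fin) (by
     intro n hn
     rw [Function.mem_support] at hn
     by_contra hmem
     apply hn
     have h : ∀ i : ℤ, P.coeff i * (σ ^ i) (Q.coeff (n - i)) = 0 := by
       intro i
       by_cases hP : P.coeff i = 0
       · rw [hP, zero_mul]
       · have hQ : Q.coeff (n - i) = 0 := by
           by_contra hQ
           apply hmem
           have hmm : i + (n - i) = n := by ring
           rw [← hmm]
           exact Set.mem_image2_of_mem (Function.mem_support.mpr hP)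
             (Function.mem_support.mpr hQ)
         rw [hQ, map_zero, mul_zero]
     rw [finsum_congr h, finsum_zero])⟩
/-- The adjoint `#`, determined by `a^# = a` for `a ∈ R` and `Λ^# = Λ^{-1}`:
`(Σ_i a_i Λ^i)^# = Σ_i Λ^{-i} a_i = Σ_i σ^{-i}(a_i) Λ^{-i}`. -/
def tadj (P : TL R) : TL R :=
  ⟨fun n => (σ ^ n) (P.coeff (-n)),
   Set.Finite.subset (P.fin.image (fun m => -m)) (by
     intro n hn
     rw [Function.mem_support] at hn
     refine ⟨-n, ?_, by simp⟩
     rw [Function.mem_support]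
     intro h
     exact hn (by rw [h, map_zero]))⟩
/-- Finite sums `Σ_{i=1}^{N} f i`. -/
noncomputable def sumTL (f : ℕ → TL R) : ℕ → TL R
  | 0 => zero
  | (k + 1) => tadd (sumTL f k) (f (k + 1))
end TL
end ExtendedDToda
namespace ExtendedDToda.TL
open Pointwise

variable {R : Type} [CommRing R] (σ : RingAut R)

lemma ext' {P Q : TL R} (h : ∀ n, P.coeff n = Q.coeff n) : P = Q := by
  cases P; cases Q
  simp only [TL.mk.injEq]
  exact funext h

lemma sigma_pow_apply (i j : ℤ) (r : R) : (σ ^ (i + j)) r = (σ ^ i) ((σ ^ j) r) := by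
  rw [zpow_add]; rfl

lemma coeff_tmul (P Q : TL R) (n : ℤ) :
    (tmul σ P Q).coeff n = ∑ᶠ i : ℤ, P.coeff i * (σ ^ i) (Q.coeff (n - i)) := rfl

lemma coeff_tadj (P : TL R) (n : ℤ) : (tadj σ P).coeff n = (σ ^ n) (P.coeff (-n)) := rfl

lemma tmul_coeff_eq_sum (P Q : TL R) (n : ℤ) :
    (tmul σ P Q).coeff n = ∑ j ∈ P.fin.toFinset, P.coeff j * (σ ^ j) (Q.coeff (n - j)) := by
  apply finsum_eq_finset_sum_of_support_subset
  intro j hj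
  rw [Function.mem_support] at hj
  simp only [Finset.coe_sort_coe, Finset.mem_coe, Set.Finite.mem_toFinset, Function.mem_support]
  intro h
  exact hj (by rw [h, zero_mul])

lemma coeff_tmul_support (P Q : TL R) {n : ℤ}
    (h : n ∉ P.fin.toFinset + Q.fin.toFinset) : (tmul σ P Q).coeff n = 0 := by
  rw [coeff_tmul]
  apply finsum_eq_zero_of_forall_eq_zero
  intro i
  by_cases hP : P.coeff i = 0
  · rw [hP, zero_mul]
  · have hQ : Q.coeff (n - i) = 0 := by
      by_contra hQ
      apply h
      have : n = i + (n - i) := by ring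
      rw [this]
      exact Finset.add_mem_add (P.fin.mem_toFinset.mpr hP) (Q.fin.mem_toFinset.mpr hQ)
    rw [hQ, map_zero, mul_zero]

lemma support_subset_helper (P : TL R) (g : ℤ → R) :
    (Function.support fun j => P.coeff j * g j) ⊆ ↑P.fin.toFinset := by
  intro j hj
  rw [Function.mem_support] at hj
  simp only [Finset.coe_sort_coe, Finset.mem_coe, Set.Finite.mem_toFinset, Function.mem_support]
  intro h
  exact hj (by rw [h, zero_mul])

lemma tmul_assoc (P Q S : TL R) : tmul σ (tmul σ P Q) S = tmul σ P (tmul σ Q S) := by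
  apply ext'
  intro n
  rw [coeff_tmul, coeff_tmul]
  have hL : (∑ᶠ i : ℤ, (tmul σ P Q).coeff i * (σ ^ i) (S.coeff (n - i)))
      = ∑ i ∈ P.fin.toFinset + Q.fin.toFinset,
          (tmul σ P Q).coeff i * (σ ^ i) (S.coeff (n - i)) := by
    apply finsum_eq_finset_sum_of_support_subset
    intro i hi
    rw [Function.mem_support] at hi
    simp only [Finset.coe_sort_coe, Finset.mem_coe]
    by_contra hmem
    exact hi (by rw [coeff_tmul_support σ P Q hmem, zero_mul])
  have hR : (∑ᶠ j : ℤ, P.coeff j * (σ ^ j) ((tmul σ Q S).coeff (n - j)))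
      = ∑ j ∈ P.fin.toFinset, P.coeff j * (σ ^ j) ((tmul σ Q S).coeff (n - j)) :=
    finsum_eq_finset_sum_of_support_subset _ (support_subset_helper P _)
  rw [hL, hR]
  have step1 : ∀ i ∈ P.fin.toFinset + Q.fin.toFinset,
      (tmul σ P Q).coeff i * (σ ^ i) (S.coeff (n - i))
      = ∑ j ∈ P.fin.toFinset, P.coeff j * (σ ^ j) (Q.coeff (i - j)) * (σ ^ i) (S.coeff (n - i)) := by
    intro i _
    rw [tmul_coeff_eq_sum, Finset.sum_mul]
  rw [Finset.sum_congr rfl step1, Finset.sum_comm]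
  apply Finset.sum_congr rfl
  intro j hj
  have hsub : Q.fin.toFinset.map (addLeftEmbedding j) ⊆ P.fin.toFinset + Q.fin.toFinset := by
    intro i hi
    rw [Finset.mem_map] at hi
    obtain ⟨k, hk, rfl⟩ := hi
    exact Finset.add_mem_add hj hk
  have hzero : ∀ i ∈ P.fin.toFinset + Q.fin.toFinset,
      i ∉ Q.fin.toFinset.map (addLeftEmbedding j) →
      P.coeff j * (σ ^ j) (Q.coeff (i - j)) * (σ ^ i) (S.coeff (n - i)) = 0 := by
    intro i _ hi
    have hQ : Q.coeff (i - j) = 0 := by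
      by_contra hQ
      apply hi
      rw [Finset.mem_map]
      exact ⟨i - j, Q.fin.mem_toFinset.mpr hQ, by rw [addLeftEmbedding_apply]; ring⟩
    rw [hQ, map_zero, mul_zero, zero_mul]
  rw [← Finset.sum_subset hsub hzero, Finset.sum_map,
    tmul_coeff_eq_sum σ Q S (n - j), map_sum, Finset.mul_sum]
  apply Finset.sum_congr rfl
  intro k _
  simp only [addLeftEmbedding_apply]
  have e1 : j + k - j = k := by ring
  have e2 : n - (j + k) = n - j - k := by ring
  rw [e1, e2, map_mul, ← sigma_pow_apply, mul_assoc]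

lemma tadj_tmul (P Q : TL R) : tadj σ (tmul σ P Q) = tmul σ (tadj σ Q) (tadj σ P) := by
  apply ext'
  intro n
  rw [coeff_tadj, coeff_tmul, coeff_tmul]
  have hL : (∑ᶠ i : ℤ, P.coeff i * (σ ^ i) (Q.coeff (-n - i)))
      = ∑ i ∈ P.fin.toFinset, P.coeff i * (σ ^ i) (Q.coeff (-n - i)) :=
    finsum_eq_finset_sum_of_support_subset _ (support_subset_helper P _)
  rw [hL, map_sum]
  have hR : (∑ᶠ j : ℤ, (tadj σ Q).coeff j * (σ ^ j) ((tadj σ P).coeff (n - j)))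
      = ∑ j ∈ P.fin.toFinset.map (addLeftEmbedding n),
          (tadj σ Q).coeff j * (σ ^ j) ((tadj σ P).coeff (n - j)) := by
    apply finsum_eq_finset_sum_of_support_subset
    intro j hj
    rw [Function.mem_support] at hj
    simp only [Finset.coe_sort_coe, Finset.mem_coe, Finset.mem_map, Set.Finite.mem_toFinset,
      Function.mem_support, addLeftEmbedding_apply]
    refine ⟨j - n, fun h => hj ?_, by ring⟩
    rw [coeff_tadj, coeff_tadj]
    have : -(n - j) = j - n := by ring
    rw [this, h, map_zero, map_zero, mul_zero]
  rw [hR, Finset.sum_map]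
  apply Finset.sum_congr rfl
  intro i _
  simp only [addLeftEmbedding_apply, coeff_tadj]
  have e1 : -(n + i) = -n - i := by ring
  have e2 : n - (n + i) = -i := by ring
  have e3 : -(-i) = i := by ring
  rw [e1, e2, e3, map_mul, ← sigma_pow_apply, ← sigma_pow_apply]
  have e4 : n + i + -i = n := by ring
  rw [e4, mul_comm]

lemma coeff_tadd (P Q : TL R) (n : ℤ) : (tadd P Q).coeff n = P.coeff n + Q.coeff n := rfl
lemma coeff_tneg (P : TL R) (n : ℤ) : (tneg P).coeff n = -P.coeff n := rfl
lemma coeff_tsub (P Q : TL R) (n : ℤ) : (tsub P Q).coeff n = P.coeff n - Q.coeff n := by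
  rw [tsub, coeff_tadd, coeff_tneg]; ring

lemma tmul_tneg_tneg (P Q : TL R) : tmul σ (tneg P) (tneg Q) = tmul σ P Q := by
  apply ext'
  intro n
  rw [coeff_tmul, coeff_tmul]
  apply finsum_congr
  intro i
  rw [coeff_tneg, coeff_tneg, map_neg, neg_mul_neg]

lemma tadj_tadd (P Q : TL R) : tadj σ (tadd P Q) = tadd (tadj σ P) (tadj σ Q) := by
  apply ext'
  intro n
  rw [coeff_tadj, coeff_tadd, coeff_tadd, coeff_tadj, coeff_tadj, map_add]

lemma tadj_tneg (P : TL R) : tadj σ (tneg P) = tneg (tadj σ P) := by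
  apply ext'
  intro n
  rw [coeff_tadj, coeff_tneg, coeff_tneg, coeff_tadj, map_neg]

lemma tadj_tsub (P Q : TL R) : tadj σ (tsub P Q) = tsub (tadj σ P) (tadj σ Q) := by
  rw [tsub, tadj_tadd, tadj_tneg, tsub]

lemma tsub_antisymm (P Q : TL R) : tsub P Q = tneg (tsub Q P) := by
  apply ext'
  intro n
  rw [coeff_tneg, coeff_tsub, coeff_tsub]; ring

lemma coeff_single (k : ℤ) (r : R) (n : ℤ) :
    (single k r : TL R).coeff n = if n = k then r else 0 := rfl

lemma tadj_single (k : ℤ) (r : R) :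
    tadj σ (single k r) = single (-k) ((σ ^ (-k)) r) := by
  apply ext'
  intro n
  rw [coeff_tadj, coeff_single, coeff_single]
  by_cases h : n = -k
  · rw [if_pos (by omega), if_pos h, h]
  · rw [if_neg (by omega), if_neg h, map_zero]

lemma tmul_single (k l : ℤ) (r s : R) :
    tmul σ (single k r) (single l s) = single (k + l) (r * (σ ^ k) s) := by
  apply ext'
  intro n
  rw [coeff_tmul, coeff_single]
  rw [finsum_eq_single _ k (fun x hx => by rw [coeff_single, if_neg hx, zero_mul])]
  rw [coeff_single, if_pos rfl, coeff_single]
  by_cases h : n = k + l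
  · rw [if_pos (by omega), if_pos h]
  · rw [if_neg (by omega), map_zero, mul_zero, if_neg h]

lemma tadj_cst (r : R) : tadj σ (cst r) = cst r := by
  rw [cst, tadj_single, neg_zero, zpow_zero]
  rfl

lemma tadj_lam (k : ℤ) : tadj σ (lam k) = lam (-k) := by
  rw [lam, tadj_single, map_one, lam]

lemma tadj_zero : tadj σ (zero : TL R) = zero := by
  apply ext'
  intro n
  show (σ ^ n) 0 = 0
  rw [map_zero]

lemma tneg_zero : tneg (zero : TL R) = zero := by
  apply ext'
  intro n
  show -(0 : R) = 0
  rw [neg_zero]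

lemma tneg_tadd (P Q : TL R) : tneg (tadd P Q) = tadd (tneg P) (tneg Q) := by
  apply ext'
  intro n
  rw [coeff_tneg, coeff_tadd, coeff_tadd, coeff_tneg, coeff_tneg]; ring

lemma tadj_D : tadj σ (tsub (lam 1) (lam (-1)) : TL R)
    = tneg (tsub (lam 1) (lam (-1))) := by
  rw [tadj_tsub, tadj_lam, tadj_lam, ← tsub_antisymm]
  norm_num

lemma tadj_term (i : ℕ) (r : R) :
    tadj σ (tsub (tmul σ (cst r) (lam (i : ℤ))) (tmul σ (lam (-(i : ℤ))) (cst r)))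
    = tneg (tsub (tmul σ (cst r) (lam (i : ℤ))) (tmul σ (lam (-(i : ℤ))) (cst r))) := by
  rw [tadj_tsub, tadj_tmul, tadj_tmul, tadj_cst, tadj_lam, tadj_lam, ← tsub_antisymm]
  norm_num

lemma tadj_S (N : ℕ) (a : ℕ → R) :
    tadj σ (sumTL (fun i => tsub (tmul σ (cst (a i)) (lam (i : ℤ)))
        (tmul σ (lam (-(i : ℤ))) (cst (a i)))) N)
    = tneg (sumTL (fun i => tsub (tmul σ (cst (a i)) (lam (i : ℤ)))
        (tmul σ (lam (-(i : ℤ))) (cst (a i)))) N) := by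
  induction N with
  | zero => rw [sumTL, tadj_zero, tneg_zero]
  | succ k ih =>
      rw [sumTL, tadj_tadd, ih, tadj_term, tneg_tadd]

end ExtendedDToda.TL

open ExtendedDToda ExtendedDToda.TL in
/-- for `a_1, …, a_N ∈ R`, the operator
`𝓐 := (Σ_{i=1}^{N} (a_iΛ^i - Λ^{-i}a_i))·(Λ - Λ^{-1})` satisfies
`𝓐^#·(Λ - Λ^{-1}) = (Λ - Λ^{-1})·𝓐`, i.e.
`𝓐^# = (Λ-Λ^{-1})·𝓐·(Λ-Λ^{-1})^{-1}` in the localization at `Λ - Λ^{-1}`. -/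
theorem statement16 {R : Type} [CommRing R] (σ : RingAut R) (N : ℕ) (a : ℕ → R) :
    tmul σ
      (tadj σ (tmul σ
        (sumTL (fun i => tsub (tmul σ (cst (a i)) (lam (i : ℤ)))
          (tmul σ (lam (-(i : ℤ))) (cst (a i)))) N)
        (tsub (lam 1) (lam (-1)))))
      (tsub (lam 1) (lam (-1)))
    = tmul σ (tsub (lam 1) (lam (-1)))
        (tmul σ
          (sumTL (fun i => tsub (tmul σ (cst (a i)) (lam (i : ℤ)))
            (tmul σ (lam (-(i : ℤ))) (cst (a i)))) N)
          (tsub (lam 1) (lam (-1)))) := by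
  rw [tadj_tmul, tadj_D, tadj_S, tmul_tneg_tneg, tmul_assoc]
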